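/- Fix n,m ≥ 1. The composition of the automaton A_n (single state σ, input {0,…,n}, output {0,1}, ψ(σ,x) = 0^x 1 for 0 ≤ x ≤ n−1 and ψ(σ,n) = 0^n) with the automaton B_m (as defined) has states {0,…,m−1} (identifying (σ,q) with q), transition function φ(q,x) = 0 for 0 ≤ x ≤ n−1 and φ(q,n) = q+n mod m, and output function ψ(q,x) = m^{⌊(q+x)/m⌋}(q+x mod m) for 0 ≤ x ≤ n−1 and ψ(q,n) = m^{⌊(q+n)/m⌋}. Moreover, all output values are nonempty words if and only if n ≥ m. -/

import Mathlib

/-- State of an automaton with transition `φ` after reading a finite word from `q`. -/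
def runW {Q X : Type*} (φ : Q → X → Q) : Q → List X → Q
  | q, [] => q
  | q, x :: xs => runW φ (φ q x) xs

/-- Output word produced by an asynchronous automaton with transition `φ` and
output `ψ : Q × X → Y*` on reading a finite word from state `q`. -/
def outW {Q X Y : Type*} (φ : Q → X → Q) (ψ : Q → X → List Y) : Q → List X → List Y
  | _, [] => []
  | q, x :: xs => ψ q x ++ outW φ ψ (φ q x) xs

/-- Output function of the one-state automaton `A_n`:
`ψ(σ,x) = 0^x 1` for `0 ≤ x ≤ n-1` and `ψ(σ,n) = 0^n`. -/
def psiA (n : ℕ) (x : Fin (n + 1)) : List (Fin 2) :=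
  if x.val = n then List.replicate n 0 else List.replicate x.val 0 ++ [1]

/-- Transition function of the automaton `B_m`: `φ(q,1) = 0`, `φ(q,0) = q + 1 (mod m)`. -/
def phiB (m : ℕ) (q : ZMod m) (x : Fin 2) : ZMod m :=
  if x = 1 then 0 else q + 1

open Fin.NatCast

/-- Output function of `B_m`: `ψ(q,1) = q`, `ψ(q,0) = ε` for `q ≠ m-1`, `ψ(m-1,0) = m`. -/
def psiB (m : ℕ) (q : ZMod m) (x : Fin 2) : List (Fin (m + 1)) :=
  if x = 1 then [(q.val : Fin (m + 1))]
  else if q.val = m - 1 then [((m : ℕ) : Fin (m + 1))] else []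

lemma run_zeros (m : ℕ) [NeZero m] (k : ℕ) : ∀ q : ZMod m,
    runW (phiB m) q (List.replicate k (0 : Fin 2)) = q + k := by
  induction k with
  | zero => intro q; simp [runW]
  | succ k ih =>
    intro q
    rw [List.replicate_succ]
    show runW (phiB m) (phiB m q 0) _ = _
    rw [ih]
    simp [phiB]
    push_cast
    ring

lemma val_add_one (m : ℕ) [NeZero m] (q : ZMod m) :
    (q + 1).val = (q.val + 1) % m := by
  rw [ZMod.val_add, ZMod.val_one_eq_one_mod, Nat.add_mod_mod]

lemma out_zeros (m : ℕ) [NeZero m] (k : ℕ) : ∀ q : ZMod m,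
    outW (phiB m) (psiB m) q (List.replicate k (0 : Fin 2)) =
      List.replicate ((q.val + k) / m) ((m : ℕ) : Fin (m + 1)) := by
  induction k with
  | zero =>
    intro q
    have := q.val_lt
    simp [outW, Nat.div_eq_of_lt this]
  | succ k ih =>
    intro q
    rw [List.replicate_succ]
    show psiB m q 0 ++ outW (phiB m) (psiB m) (phiB m q 0) _ = _
    rw [ih]
    have hm := Nat.pos_of_ne_zero (NeZero.ne m)
    have hq := q.val_lt
    have hv := val_add_one m q
    simp only [phiB, psiB, if_neg (by decide : (0 : Fin 2) ≠ 1)]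
    by_cases h : q.val = m - 1
    · rw [if_pos h, hv, h]
      have : (m - 1 + 1) % m = 0 := by
        rw [Nat.sub_add_cancel hm, Nat.mod_self]
      rw [this]
      have : (m - 1 + (k + 1)) / m = k / m + 1 := by
        rw [show m - 1 + (k + 1) = k + m by omega, Nat.add_div_right _ hm]
      rw [this]
      simp [List.replicate_succ]
    · rw [if_neg h, hv]
      have h1 : q.val + 1 < m := by omega
      rw [Nat.mod_eq_of_lt h1]
      simp [show q.val + 1 + k = q.val + (k + 1) by omega]

/-- The composition `A_n ∘ B_m` (states identified with `{0,…,m-1}`) has transition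
`φ(q,x) = 0` for `x ≤ n-1` and `φ(q,n) = q + n (mod m)`, and output
`ψ(q,x) = m^{⌊(q+x)/m⌋}((q+x) mod m)` for `x ≤ n-1`, `ψ(q,n) = m^{⌊(q+n)/m⌋}`.
Moreover all output values are nonempty words iff `n ≥ m`. -/
theorem stmt10 (n m : ℕ) (hn : 1 ≤ n) [NeZero m] :
    (∀ (q : ZMod m) (x : Fin (n + 1)),
        runW (phiB m) q (psiA n x) = if x.val = n then q + n else 0) ∧
    (∀ (q : ZMod m) (x : Fin (n + 1)),
        outW (phiB m) (psiB m) q (psiA n x) =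
          if x.val = n then List.replicate ((q.val + n) / m) ((m : ℕ) : Fin (m + 1))
          else List.replicate ((q.val + x.val) / m) ((m : ℕ) : Fin (m + 1))
                 ++ [(((q.val + x.val) % m : ℕ) : Fin (m + 1))]) ∧
    ((∀ (q : ZMod m) (x : Fin (n + 1)),
        outW (phiB m) (psiB m) q (psiA n x) ≠ []) ↔ m ≤ n) := by
  have hm := Nat.pos_of_ne_zero (NeZero.ne m)
  have hrunapp : ∀ (a b : List (Fin 2)) (q : ZMod m),
      runW (phiB m) q (a ++ b) = runW (phiB m) (runW (phiB m) q a) b := by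
    intro a
    induction a with
    | nil => intro b q; simp [runW]
    | cons x xs ih => intro b q; simp [runW, ih]
  have houtapp : ∀ (a b : List (Fin 2)) (q : ZMod m),
      outW (phiB m) (psiB m) q (a ++ b) =
        outW (phiB m) (psiB m) q a ++ outW (phiB m) (psiB m) (runW (phiB m) q a) b := by
    intro a
    induction a with
    | nil => intro b q; simp [runW, outW]
    | cons x xs ih => intro b q; simp [runW, outW, ih]
  have hrun : ∀ (q : ZMod m) (x : Fin (n + 1)),
      runW (phiB m) q (psiA n x) = if x.val = n then q + n else 0 := by
    intro q x
    by_cases h : x.val = n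
    · simp [psiA, h, run_zeros]
    · simp only [psiA, if_neg h, hrunapp, run_zeros]
      simp [runW, phiB]
  have hout : ∀ (q : ZMod m) (x : Fin (n + 1)),
      outW (phiB m) (psiB m) q (psiA n x) =
        if x.val = n then List.replicate ((q.val + n) / m) ((m : ℕ) : Fin (m + 1))
        else List.replicate ((q.val + x.val) / m) ((m : ℕ) : Fin (m + 1))
               ++ [(((q.val + x.val) % m : ℕ) : Fin (m + 1))] := by
    intro q x
    by_cases h : x.val = n
    · simp [psiA, h, out_zeros]
    · simp only [psiA, if_neg h, houtapp, out_zeros, run_zeros]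
      simp only [outW, psiB, if_pos rfl, phiB]
      simp [ZMod.val_add, ZMod.val_natCast, Nat.add_mod_mod]
  refine ⟨hrun, hout, ?_⟩
  constructor
  · intro h
    have := h 0 (Fin.last n)
    rw [hout] at this
    simp [Fin.val_last] at this
    by_contra hc
    push_neg at hc
    omega
  · intro hmn q x
    rw [hout]
    by_cases h : x.val = n
    · rw [if_pos h]
      have : 1 ≤ (q.val + n) / m := Nat.one_le_div_iff hm |>.2 (by omega)
      intro hcon
      have := congrArg List.length hcon
      simp at this
      omega
    · simp [if_neg h]
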